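/- Let $\phi \in GL^\infty(\mathbb{T})$ and suppose $F = \phi\,\tilde\phi^{-1}$ admits a weak antisymmetric factorization $F = \phi_- t^{2\kappa}\tilde\phi_-^{-1}$ in $L^p$. Then $\phi_0 := t^{-\kappa}\phi_-^{-1}\phi$ is an even function, $|1-t|\phi_0 \in L^q(\mathbb{T})$, $|1+t|\phi_0^{-1} \in L^p(\mathbb{T})$, and $\phi = \phi_- t^{\kappa}\phi_0$ is a weak asymmetric factorization of $\phi$. -/

import Mathlib

open MeasureTheory Complex Real
open scoped ENNReal
noncomputable section
namespace TH

abbrev Tp : ℝ := 2 * Real.pi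
instance : Fact (0 < Tp) := ⟨by positivity⟩
abbrev 𝕋 := AddCircle Tp
abbrev μ : Measure 𝕋 := AddCircle.haarAddCircle

/-- Invertibility in `L^∞(𝕋)`. -/
def GLinf (φ : 𝕋 → ℂ) : Prop :=
  MemLp φ ⊤ μ ∧ MemLp (fun x => (φ x)⁻¹) ⊤ μ ∧ ∀ᵐ x ∂μ, φ x ≠ 0

/-- The function `t ↦ 1 + t⁻¹` on the circle. -/
def onePlusTInv (x : 𝕋) : ℂ := 1 + fourier (-1) x
/-- The function `t ↦ 1 - t⁻¹` on the circle. -/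
def oneMinusTInv (x : 𝕋) : ℂ := 1 - fourier (-1) x
/-- The function `t ↦ |1 - t|` on the circle. -/
def absOneMinusT (x : 𝕋) : ℂ := ((‖1 - fourier 1 x‖ : ℝ) : ℂ)
/-- The function `t ↦ |1 + t|` on the circle. -/
def absOnePlusT (x : 𝕋) : ℂ := ((‖1 + fourier 1 x‖ : ℝ) : ℂ)
/-- Evenness (a.e.): `f(t⁻¹) = f(t)`. -/
def evenAE (f : 𝕋 → ℂ) : Prop := ∀ᵐ x ∂μ, f (-x) = f x

/-- `φ = φ₋ tᵏ φ₀` is a weak asymmetric factorization in `L^p(𝕋)`: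
`(1+t⁻¹)φ₋ ∈ H^p-bar`, `(1-t⁻¹)φ₋⁻¹ ∈ H^q-bar`, `|1-t|φ₀ ∈ L^q` even,
`|1+t|φ₀⁻¹ ∈ L^p` even. -/
def WeakAsymFactor (p q : ℝ≥0∞) (φ φm φ0 : 𝕋 → ℂ) (κ : ℤ) : Prop :=
  (∀ᵐ x ∂μ, φ x = φm x * fourier κ x * φ0 x) ∧
  MemLp (fun x => onePlusTInv x * φm x) p μ ∧
  (∀ n : ℤ, 0 < n → fourierCoeff (fun x => onePlusTInv x * φm x) n = 0) ∧
  MemLp (fun x => oneMinusTInv x * (φm x)⁻¹) q μ ∧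
  (∀ n : ℤ, 0 < n → fourierCoeff (fun x => oneMinusTInv x * (φm x)⁻¹) n = 0) ∧
  MemLp (fun x => absOneMinusT x * φ0 x) q μ ∧
  MemLp (fun x => absOnePlusT x * (φ0 x)⁻¹) p μ ∧
  evenAE φ0

/-- `F = φ₋ t^{2κ} (φ₋~)⁻¹` is a weak antisymmetric factorization in `L^p(𝕋)`:
`(1+t⁻¹)φ₋ ∈ H^p-bar` and `(1-t⁻¹)φ₋⁻¹ ∈ H^q-bar`. -/
def WeakAntisymFactor (p q : ℝ≥0∞) (F φm : 𝕋 → ℂ) (κ : ℤ) : Prop :=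
  (∀ᵐ x ∂μ, F x = φm x * fourier (2 * κ) x * (φm (-x))⁻¹) ∧
  MemLp (fun x => onePlusTInv x * φm x) p μ ∧
  (∀ n : ℤ, 0 < n → fourierCoeff (fun x => onePlusTInv x * φm x) n = 0) ∧
  MemLp (fun x => oneMinusTInv x * (φm x)⁻¹) q μ ∧
  (∀ n : ℤ, 0 < n → fourierCoeff (fun x => oneMinusTInv x * (φm x)⁻¹) n = 0)

/- helper lemmas -/

lemma fourier_neg_arg (n : ℤ) (x : 𝕋) : fourier n (-x) = fourier (-n) x := by
  rw [fourier_apply, fourier_apply, smul_neg, ← neg_smul]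

lemma fourier_mul_neg (n : ℤ) (x : 𝕋) : fourier n x * fourier (-n) x = 1 := by
  rw [← fourier_add]; simp

lemma fourier_ne_zero (n : ℤ) (x : 𝕋) : fourier n x ≠ 0 := by
  rw [fourier_apply]; exact Circle.coe_ne_zero _

lemma fourier_norm (n : ℤ) (x : 𝕋) : ‖fourier n x‖ = 1 := by
  rw [fourier_apply]; exact Circle.norm_coe _

lemma absOneMinusT_eq (x : 𝕋) : absOneMinusT x = ((‖oneMinusTInv x‖ : ℝ) : ℂ) := by
  have : oneMinusTInv x = (starRingEnd ℂ) (1 - fourier 1 x) := by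
    rw [oneMinusTInv, map_sub, map_one, ← fourier_neg]
  rw [absOneMinusT, this, Complex.norm_conj]

lemma absOnePlusT_eq (x : 𝕋) : absOnePlusT x = ((‖onePlusTInv x‖ : ℝ) : ℂ) := by
  have : onePlusTInv x = (starRingEnd ℂ) (1 + fourier 1 x) := by
    rw [onePlusTInv, map_add, map_one, ← fourier_neg]
  rw [absOnePlusT, this, Complex.norm_conj]

lemma ae_neg {P : 𝕋 → Prop} (h : ∀ᵐ x ∂μ, P x) : ∀ᵐ x ∂μ, P (-x) :=
  (Measure.measurePreserving_neg μ).quasiMeasurePreserving.ae (p := P) h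

lemma norm_c_le {a g : ℂ} (ha : ‖a‖ = 1) : ‖((‖g‖ : ℝ) : ℂ) * a * g⁻¹‖ ≤ 1 := by
  rw [norm_mul, norm_mul, ha, mul_one, norm_inv]
  rw [Complex.norm_real, Real.norm_eq_abs, _root_.abs_of_nonneg (norm_nonneg g)]
  rcases eq_or_ne g 0 with h | h
  · simp [h]
  · rw [mul_inv_cancel₀ (by simpa using h)]

/-- If `F = φ φ~⁻¹` admits a weak antisymmetric factorization `F = φ₋ t^{2κ} (φ₋~)⁻¹`, then
with `φ₀ := t^{-κ} φ₋⁻¹ φ`, the product `φ = φ₋ tᵏ φ₀` is a weak asymmetric factorization: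
`φ₀` is even, `|1-t|φ₀ ∈ L^q` and `|1+t|φ₀⁻¹ ∈ L^p`. -/
theorem stmt_16 (p q : ℝ) (hpq : p.HolderConjugate q)
    (φ φm : 𝕋 → ℂ) (κ : ℤ) (hφ : GLinf φ)
    (h : WeakAntisymFactor (ENNReal.ofReal p) (ENNReal.ofReal q)
      (fun x => φ x * (φ (-x))⁻¹) φm κ) :
    WeakAsymFactor (ENNReal.ofReal p) (ENNReal.ofReal q) φ φm
      (fun x => fourier (-κ) x * (φm x)⁻¹ * φ x) κ := by
  obtain ⟨hF, h2, h3, h4, h5⟩ := h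
  obtain ⟨hφ1, hφ2, hφ3⟩ := hφ
  have hφ3' : ∀ᵐ x ∂μ, φ (-x) ≠ 0 := ae_neg (P := fun y => φ y ≠ 0) hφ3
  -- the key a.e. package
  have key : ∀ᵐ x ∂μ, φ x ≠ 0 ∧ φ (-x) ≠ 0 ∧ φm x ≠ 0 ∧ φm (-x) ≠ 0 ∧
      φ x * (φ (-x))⁻¹ = φm x * fourier (2 * κ) x * (φm (-x))⁻¹ := by
    filter_upwards [hφ3, hφ3', hF] with x h1 hneg hfx
    have hL : φ x * (φ (-x))⁻¹ ≠ 0 := mul_ne_zero h1 (inv_ne_zero hneg)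
    refine ⟨h1, hneg, ?_, ?_, hfx⟩
    · intro hm; rw [hfx, hm] at hL; simp at hL
    · intro hm; rw [hfx, hm] at hL; simp at hL
  refine ⟨?_, h2, h3, h4, h5, ?_, ?_, ?_⟩
  · -- factorization
    filter_upwards [key] with x ⟨_, _, hm, _, _⟩
    have h1 : fourier κ x * fourier (-κ) x = 1 := fourier_mul_neg κ x
    calc φ x = (φm x * (φm x)⁻¹) * (fourier κ x * fourier (-κ) x) * φ x := by
          rw [mul_inv_cancel₀ hm, h1]; ring
      _ = φm x * fourier κ x * (fourier (-κ) x * (φm x)⁻¹ * φ x) := by ring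
  · -- |1-t| φ0 ∈ L^q
    set g : 𝕋 → ℂ := fun x => oneMinusTInv x * (φm x)⁻¹ with hg
    set c : 𝕋 → ℂ := fun x => absOneMinusT x * fourier (-κ) x * (oneMinusTInv x)⁻¹ with hc
    have heq : ∀ x, absOneMinusT x * (fourier (-κ) x * (φm x)⁻¹ * φ x)
        = c x * (φ x * g x) := by
      intro x
      rcases eq_or_ne (oneMinusTInv x) 0 with h0 | h0
      · have hf1 : fourier 1 x = 1 := by
          have h0' : (1 : ℂ) - fourier (-1) x = 0 := h0
          have h1 : fourier (-1) x = 1 := by linear_combination -h0'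
          have h2' : fourier 1 x * fourier (-1) x = 1 := fourier_mul_neg 1 x
          rw [h1, mul_one] at h2'; exact h2'
        have habs : absOneMinusT x = 0 := by simp [absOneMinusT, hf1]
        simp [hc, hg, h0, habs]
      · simp only [hc, hg]
        have hu : (oneMinusTInv x)⁻¹ * oneMinusTInv x = 1 := inv_mul_cancel₀ h0
        linear_combination (-(absOneMinusT x * fourier (-κ) x * (φm x)⁻¹ * φ x)) * hu
    have hgl : MemLp (φ • g) (ENNReal.ofReal q) μ := MemLp.smul (r := ENNReal.ofReal q) h4 hφ1
    have hcm : AEStronglyMeasurable c μ := by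
      have hcont1 : Continuous (fun x : 𝕋 => absOneMinusT x * fourier (-κ) x) := by
        apply Continuous.mul
        · exact Complex.continuous_ofReal.comp
            (continuous_norm.comp (continuous_const.sub (map_continuous (fourier 1))))
        · exact map_continuous (fourier (-κ))
      have hcont2 : Continuous (oneMinusTInv : 𝕋 → ℂ) :=
        continuous_const.sub (map_continuous (fourier (-1)))
      exact ((hcont1.measurable.mul hcont2.measurable.inv)).aestronglyMeasurable
    have hmeas : AEStronglyMeasurable
        (fun x => absOneMinusT x * (fourier (-κ) x * (φm x)⁻¹ * φ x)) μ := by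
      have : (fun x => absOneMinusT x * (fourier (-κ) x * (φm x)⁻¹ * φ x))
          = fun x => c x * (φ • g) x := funext heq
      rw [this]
      exact hcm.mul hgl.aestronglyMeasurable
    refine hgl.of_le hmeas ?_
    refine Filter.Eventually.of_forall fun x => ?_
    rw [heq x, norm_mul]
    have hub : ‖c x‖ ≤ 1 := by
      rw [hc]
      simp only [absOneMinusT_eq]
      exact norm_c_le (fourier_norm (-κ) x)
    calc ‖c x‖ * ‖φ x * g x‖ ≤ 1 * ‖φ x * g x‖ :=
          mul_le_mul_of_nonneg_right hub (norm_nonneg _)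
      _ = ‖(φ • g) x‖ := by rw [one_mul]; rfl
  · -- |1+t| φ0⁻¹ ∈ L^p
    set g : 𝕋 → ℂ := fun x => onePlusTInv x * φm x with hg
    set c : 𝕋 → ℂ := fun x => absOnePlusT x * fourier κ x * (onePlusTInv x)⁻¹ with hc
    set ψ : 𝕋 → ℂ := fun x => (φ x)⁻¹ with hψ
    have heq : ∀ x, absOnePlusT x * (fourier (-κ) x * (φm x)⁻¹ * φ x)⁻¹
        = c x * (ψ x * g x) := by
      intro x
      have hκ : (fourier (-κ) x)⁻¹ = fourier κ x := by
        refine inv_eq_of_mul_eq_one_right ?_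
        have hk : -κ + κ = 0 := by ring
        rw [← fourier_add, hk, fourier_zero]
      have hinv : (fourier (-κ) x * (φm x)⁻¹ * φ x)⁻¹
          = fourier κ x * φm x * (φ x)⁻¹ := by
        rw [mul_inv, mul_inv, hκ, inv_inv]
      rw [hinv]
      rcases eq_or_ne (onePlusTInv x) 0 with h0 | h0
      · have hf1 : fourier 1 x = -1 := by
          have h0' : (1 : ℂ) + fourier (-1) x = 0 := h0
          have h1 : fourier (-1) x = -1 := by linear_combination h0'
          have h2' : fourier 1 x * fourier (-1) x = 1 := fourier_mul_neg 1 x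
          rw [h1] at h2'; linear_combination -h2'
        have habs : absOnePlusT x = 0 := by simp [absOnePlusT, hf1]
        simp [hc, hg, h0, habs]
      · simp only [hc, hg, hψ]
        have hu : (onePlusTInv x)⁻¹ * onePlusTInv x = 1 := inv_mul_cancel₀ h0
        linear_combination (-(absOnePlusT x * fourier κ x * φm x * (φ x)⁻¹)) * hu
    have hgl : MemLp (ψ • g) (ENNReal.ofReal p) μ := MemLp.smul (r := ENNReal.ofReal p) h2 hφ2
    have hcm : AEStronglyMeasurable c μ := by
      have hcont1 : Continuous (fun x : 𝕋 => absOnePlusT x * fourier κ x) := by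
        apply Continuous.mul
        · exact Complex.continuous_ofReal.comp
            (continuous_norm.comp (continuous_const.add (map_continuous (fourier 1))))
        · exact map_continuous (fourier κ)
      have hcont2 : Continuous (onePlusTInv : 𝕋 → ℂ) :=
        continuous_const.add (map_continuous (fourier (-1)))
      exact ((hcont1.measurable.mul hcont2.measurable.inv)).aestronglyMeasurable
    have hmeas : AEStronglyMeasurable
        (fun x => absOnePlusT x * (fourier (-κ) x * (φm x)⁻¹ * φ x)⁻¹) μ := by
      have : (fun x => absOnePlusT x * (fourier (-κ) x * (φm x)⁻¹ * φ x)⁻¹)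
          = fun x => c x * (ψ • g) x := funext heq
      rw [this]
      exact hcm.mul hgl.aestronglyMeasurable
    refine hgl.of_le hmeas ?_
    refine Filter.Eventually.of_forall fun x => ?_
    rw [heq x, norm_mul]
    have hub : ‖c x‖ ≤ 1 := by
      rw [hc]
      simp only [absOnePlusT_eq]
      exact norm_c_le (fourier_norm κ x)
    calc ‖c x‖ * ‖ψ x * g x‖ ≤ 1 * ‖ψ x * g x‖ :=
          mul_le_mul_of_nonneg_right hub (norm_nonneg _)
      _ = ‖(ψ • g) x‖ := by rw [one_mul]; rfl
  · -- evenness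
    rw [evenAE]
    filter_upwards [key] with x ⟨hx, hnx, hm, hmn, hFx⟩
    show fourier (-κ) (-x) * (φm (-x))⁻¹ * φ (-x) = fourier (-κ) x * (φm x)⁻¹ * φ x
    have e1 : φ x = φm x * fourier (2 * κ) x * (φm (-x))⁻¹ * φ (-x) := by
      have : φ x = φ x * (φ (-x))⁻¹ * φ (-x) := by
        rw [mul_assoc, inv_mul_cancel₀ hnx, mul_one]
      rw [this, hFx]
    have hf2 : fourier (-κ) x * fourier (2 * κ) x = fourier κ x := by
      have hk : -κ + 2 * κ = κ := by ring
      rw [← fourier_add, hk]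
    rw [fourier_neg_arg, neg_neg, e1]
    calc fourier κ x * (φm (-x))⁻¹ * φ (-x)
        = (fourier (-κ) x * fourier (2 * κ) x) * (φm (-x))⁻¹ * φ (-x) := by rw [hf2]
      _ = fourier (-κ) x * (φm x)⁻¹ * (φm x * fourier (2 * κ) x * (φm (-x))⁻¹ * φ (-x)) := by
          field_simp


end TH
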